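/- In the higher derived brackets setting, for an odd element Δ and r ≥ 0, the following are equivalent: (1) all derived brackets of Δ² with more than r arguments vanish; (2) all Jacobi identities Jⁿ_Δ = 0 hold for n > r. -/

import Mathlib

open scoped Classical

/-- The Koszul sign `(-1)^{pq}` for parities `p q : ZMod 2`. -/
def ksign (p q : ZMod 2) : ℤ := if p = 1 ∧ q = 1 then -1 else 1

/-- A Lie superalgebra over `k`: a `ZMod 2`-graded module with a bilinear bracket
that is graded-antisymmetric and satisfies the graded Jacobi identity
(on homogeneous elements). -/
structure LieSuper (k G : Type) [Field k] [AddCommGroup G] [Module k G] where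
  gr : ZMod 2 → Submodule k G
  br : G →ₗ[k] G →ₗ[k] G
  br_gr : ∀ i j x y, x ∈ gr i → y ∈ gr j → br x y ∈ gr (i + j)
  skew : ∀ i j x y, x ∈ gr i → y ∈ gr j → br x y = -(ksign i j • br y x)
  jacobi : ∀ i j x y z, x ∈ gr i → y ∈ gr j →
    br x (br y z) = br (br x y) z + ksign i j • br y (br x z)

variable {k G : Type} [Field k] [AddCommGroup G] [Module k G]

/-- The `n`-th derived bracket `{a₁,…,aₙ}_D := P[⋯[[D,a₁],a₂],⋯,aₙ]`. -/
def dbr (L : LieSuper k G) (P : G →ₗ[k] G) (D : G) (l : List G) : G :=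
  P (l.foldl (fun x a => L.br x a) D)

/-- `σ` is a `(j, n-j)`-shuffle: strictly monotone on the first `j` positions
and on the last `n - j` positions. -/
def IsShuffle {n : ℕ} (j : ℕ) (σ : Equiv.Perm (Fin n)) : Prop :=
  (∀ s t : Fin n, s < t → (t : ℕ) < j → σ s < σ t) ∧
  (∀ s t : Fin n, s < t → j ≤ (s : ℕ) → σ s < σ t)

/-- The Koszul sign of the permutation `σ` of homogeneous arguments of parities `p`:
the product of `(-1)^{p_i p_j}` over all inversions of `σ`. -/
noncomputable def koszulSign {n : ℕ} (p : Fin n → ZMod 2) (σ : Equiv.Perm (Fin n)) : ℤ :=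
  ∏ q ∈ Finset.univ.filter (fun q : Fin n × Fin n => q.1 < q.2 ∧ σ q.2 < σ q.1),
    ksign (p (σ q.1)) (p (σ q.2))

/-- The `n`-th Jacobiator of the derived brackets of `D`:
`Jⁿ(a₁,…,aₙ) = Σ_{j+l=n} Σ_{(j,l)-shuffles σ} ± {{a_{σ(1)},…,a_{σ(j)}}_D, a_{σ(j+1)},…,a_{σ(n)}}_D`
with Koszul signs. -/
noncomputable def jacobiator (L : LieSuper k G) (P : G →ₗ[k] G) (D : G) {n : ℕ}
    (p : Fin n → ZMod 2) (a : Fin n → G) : G :=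
  ∑ j ∈ Finset.range (n + 1),
    ∑ σ ∈ Finset.univ.filter (fun σ : Equiv.Perm (Fin n) => IsShuffle j σ),
      koszulSign p σ •
        dbr L P D
          (dbr L P D (((List.finRange n).take j).map fun i => a (σ i)) ::
            ((List.finRange n).drop j).map fun i => a (σ i))

namespace Stmt12Aux

/-- sign of a parity -/
def sgn (e : ZMod 2) : ℤ := if e = 1 then -1 else 1

lemma ksign_eq_sgn (p q : ZMod 2) : ksign p q = sgn (p * q) := by
  revert p q; decide

lemma sgn_add (x y : ZMod 2) : sgn (x + y) = sgn x * sgn y := by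
  revert x y; decide

lemma sgn_mul_self (x : ZMod 2) : sgn x * sgn x = 1 := by revert x; decide

lemma sgn_zero : sgn 0 = 1 := rfl

variable {k G : Type} [Field k] [AddCommGroup G] [Module k G]

/-- iterated bracket -/
def fb (L : LieSuper k G) (x : G) (l : List G) : G := l.foldl (fun u v => L.br u v) x

@[simp] lemma fb_nil (L : LieSuper k G) (x : G) : fb L x [] = x := rfl

@[simp] lemma fb_cons (L : LieSuper k G) (x c : G) (l : List G) :
    fb L x (c :: l) = fb L (L.br x c) l := rfl

lemma fb_add (L : LieSuper k G) (x y : G) (l : List G) :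
    fb L (x + y) l = fb L x l + fb L y l := by
  induction l generalizing x y with
  | nil => rfl
  | cons c l ih => simp [fb_cons, map_add, LinearMap.add_apply, ih]

lemma fb_smul (L : LieSuper k G) (s : k) (x : G) (l : List G) :
    fb L (s • x) l = s • fb L x l := by
  induction l generalizing x with
  | nil => rfl
  | cons c l ih => simp [fb_cons, map_smul, LinearMap.smul_apply, ih]

lemma fb_zsmul (L : LieSuper k G) (s : ℤ) (x : G) (l : List G) :
    fb L (s • x) l = s • fb L x l := by
  induction l generalizing x with
  | nil => rfl
  | cons c l ih => simp [fb_cons, map_zsmul, LinearMap.smul_apply, ih]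

lemma fb_neg (L : LieSuper k G) (x : G) (l : List G) :
    fb L (-x) l = -fb L x l := by
  have := fb_zsmul L (-1) x l; simpa using this

lemma fb_gr (L : LieSuper k G) {n : ℕ} (p : Fin n → ZMod 2) (a : Fin n → G)
    (ha : ∀ i, a i ∈ L.gr (p i)) (t : List (Fin n)) (x : G) (i : ZMod 2)
    (hx : x ∈ L.gr i) : fb L x (t.map a) ∈ L.gr (i + (t.map p).sum) := by
  induction t generalizing x i with
  | nil => simpa using hx
  | cons c t ih =>
    have := ih (L.br x (a c)) (i + p c) (L.br_gr _ _ _ _ hx (ha c))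
    simpa [add_assoc] using this

lemma ksign_e1 : ∀ i j m : ZMod 2, ksign (i+j) m * ksign m i = ksign j m := by decide
lemma ksign_e2 : ∀ i j m : ZMod 2, ksign (i+j) m * (ksign m i * ksign m j) = 1 := by decide

/-- right Jacobi -/
lemma rightJacobi (L : LieSuper k G) (i j m : ZMod 2) (x y c : G)
    (hx : x ∈ L.gr i) (hy : y ∈ L.gr j) (hc : c ∈ L.gr m) :
    L.br (L.br x y) c =
      ksign j m • L.br (L.br x c) y + L.br x (L.br y c) := by
  have hxy : L.br x y ∈ L.gr (i + j) := L.br_gr _ _ _ _ hx hy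
  have h1 : L.br (L.br x y) c = -(ksign (i+j) m • L.br c (L.br x y)) :=
    L.skew _ _ _ _ hxy hc
  have h2 : L.br c (L.br x y) = L.br (L.br c x) y + ksign m i • L.br x (L.br c y) :=
    L.jacobi m i c x y hc hx
  have h3 : L.br c x = -(ksign m i • L.br x c) := L.skew m i c x hc hx
  have h4 : L.br c y = -(ksign m j • L.br y c) := L.skew m j c y hc hy
  rw [h1, h2, h3, h4]
  simp only [map_neg, map_zsmul, LinearMap.neg_apply, LinearMap.smul_apply, map_smul,
    smul_neg, smul_add, smul_smul, neg_add, neg_neg]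
  rw [ksign_e1, ksign_e2, one_smul, add_comm]


lemma ksign_right_zero : ∀ m : ZMod 2, ksign m 0 = 1 := by decide
lemma ksign_right_add : ∀ m x y : ZMod 2, ksign m x * ksign m y = ksign m (x + y) := by decide

section
variable {n : ℕ} (L : LieSuper k G) (p : Fin n → ZMod 2) (a : Fin n → G)

lemma movePast (ha : ∀ i, a i ∈ L.gr (p i))
    (b : G) (m : ZMod 2) (hb : b ∈ L.gr m) (hab : ∀ c, L.br b (a c) = 0) :
    ∀ (t : List (Fin n)) (x : G) (i : ZMod 2), x ∈ L.gr i →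
      fb L (L.br x b) (t.map a) =
        ksign m ((t.map p).sum) • L.br (fb L x (t.map a)) b := by
  intro t
  induction t with
  | nil => intro x i hx; simp [ksign_right_zero]
  | cons c t ih =>
    intro x i hx
    have hrj := rightJacobi L i m (p c) x b (a c) hx hb (ha c)
    rw [hab c, map_zero] at hrj
    rw [List.map_cons, fb_cons, hrj, add_zero, fb_zsmul,
      ih (L.br x (a c)) (i + p c) (L.br_gr _ _ _ _ hx (ha c))]
    rw [smul_smul, ksign_right_add]
    simp [fb_cons]

/-- the recursive expansion of `fb L (L.br x y) t` into two-block terms -/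
def expand (L : LieSuper k G) (p : Fin n → ZMod 2) (a : Fin n → G) :
    ZMod 2 → List (Fin n) → G → G → G
  | _, [], x, y => L.br x y
  | j, c :: t, x, y =>
      ksign j (p c) • expand L p a j t (L.br x (a c)) y
        + expand L p a (j + p c) t x (L.br y (a c))

lemma fb_eq_expand (ha : ∀ i, a i ∈ L.gr (p i)) :
    ∀ (t : List (Fin n)) (x y : G) (i j : ZMod 2), x ∈ L.gr i → y ∈ L.gr j →
      fb L (L.br x y) (t.map a) = expand L p a j t x y := by
  intro t
  induction t with
  | nil => intro x y i j hx hy; rfl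
  | cons c t ih =>
    intro x y i j hx hy
    have hrj := rightJacobi L i j (p c) x y (a c) hx hy (ha c)
    rw [List.map_cons, fb_cons, hrj, fb_add, fb_zsmul,
      ih (L.br x (a c)) y (i + p c) j (L.br_gr _ _ _ _ hx (ha c)) hy,
      ih x (L.br y (a c)) i (j + p c) hx (L.br_gr _ _ _ _ hy (ha c))]
    rfl

/-- closed-form sign for the expansion -/
def csign (p : Fin n → ZMod 2) (j : ZMod 2) (T S : Finset (Fin n)) : ℤ :=
  ∏ u ∈ S, ksign (j + ∑ v ∈ (T \ S).filter (fun v => v < u), p v) (p u)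

lemma expand_closed (ha : ∀ i, a i ∈ L.gr (p i)) :
    ∀ (t : List (Fin n)), t.Pairwise (· < ·) →
    ∀ (j : ZMod 2) (x y : G),
      expand L p a j t x y =
        ∑ S ∈ t.toFinset.powerset, csign p j t.toFinset S •
          L.br (fb L x ((S.sort (· ≤ ·)).map a))
            (fb L y (((t.toFinset \ S).sort (· ≤ ·)).map a)) := by
  intro t
  induction t with
  | nil =>
    intro _ j x y
    simp [expand, csign]
  | cons c t ih =>
    intro hsort j x y
    rw [List.pairwise_cons] at hsort
    obtain ⟨hlt, hsort⟩ := hsort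
    have hct : c ∉ t.toFinset := by
      simp only [List.mem_toFinset]; intro h; exact lt_irrefl c (hlt c h)
    have hTlt : ∀ u ∈ t.toFinset, c < u := fun u hu => hlt u (List.mem_toFinset.mp hu)
    have htf : (c :: t).toFinset = insert c t.toFinset := List.toFinset_cons
    rw [show expand L p a j (c::t) x y
        = ksign j (p c) • expand L p a j t (L.br x (a c)) y
          + expand L p a (j + p c) t x (L.br y (a c)) from rfl,
       ih hsort j (L.br x (a c)) y, ih hsort (j + p c) x (L.br y (a c)), htf,
       Finset.sum_powerset_insert hct, Finset.smul_sum, add_comm]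
    congr 1
    · -- S ⊆ t.toFinset, c joins the y-side
      apply Finset.sum_congr rfl
      intro S hS
      rw [Finset.mem_powerset] at hS
      have hcS : c ∉ S := fun h => hct (hS h)
      have hdiff : insert c t.toFinset \ S = insert c (t.toFinset \ S) :=
        Finset.insert_sdiff_of_notMem _ hcS
      have hcdS : c ∉ t.toFinset \ S := fun h => hct (Finset.mem_sdiff.mp h).1
      have hsort_ins : (insert c (t.toFinset \ S)).sort (· ≤ ·)
          = c :: (t.toFinset \ S).sort (· ≤ ·) :=
        Finset.sort_insert _ (fun b hb => le_of_lt (hTlt b (Finset.mem_sdiff.mp hb).1)) hcdS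
      rw [hdiff, hsort_ins, List.map_cons, fb_cons]
      congr 1
      -- signs
      unfold csign
      apply Finset.prod_congr rfl
      intro u hu
      have hcu : c < u := hTlt u (hS hu)
      have : (insert c (t.toFinset \ S)).filter (fun v => v < u)
          = insert c ((t.toFinset \ S).filter (fun v => v < u)) := by
        rw [Finset.filter_insert, if_pos hcu]
      rw [hdiff, this, Finset.sum_insert (fun h => hcdS (Finset.mem_filter.mp h).1)]
      rw [← add_assoc]
    · -- S ⊆ t.toFinset, c joins the x-side (terms insert c S)
      apply Finset.sum_congr rfl
      intro S hS
      rw [Finset.mem_powerset] at hS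
      have hcS : c ∉ S := fun h => hct (hS h)
      have hdiff : insert c t.toFinset \ insert c S = t.toFinset \ S := by
        rw [Finset.insert_sdiff_insert, Finset.sdiff_insert,
          Finset.erase_eq_of_notMem (fun h => hct (Finset.mem_sdiff.mp h).1)]
      have hsort_ins : (insert c S).sort (· ≤ ·) = c :: S.sort (· ≤ ·) :=
        Finset.sort_insert _ (fun b hb => le_of_lt (hTlt b (hS hb))) hcS
      rw [hdiff, hsort_ins, List.map_cons, fb_cons, smul_smul]
      congr 1
      -- signs
      unfold csign
      rw [Finset.prod_insert hcS]
      congr 1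
      · rw [hdiff]
        rw [Finset.filter_false_of_mem (fun v hv h => absurd (hTlt v (Finset.mem_sdiff.mp hv).1) (asymm h))]
        rw [Finset.sum_empty, add_zero]
      · apply Finset.prod_congr rfl
        intro u hu
        rw [hdiff]

end

section shufflePart
variable {n : ℕ}

/-- the subset of `Fin n` corresponding to the first block of a shuffle -/
def shufSet (j : ℕ) (σ : Equiv.Perm (Fin n)) : Finset (Fin n) :=
  (Finset.univ.filter (fun q : Fin n => (q : ℕ) < j)).image σ

lemma mem_take_finRange {j : ℕ} (q : Fin n) :
    q ∈ (List.finRange n).take j ↔ (q : ℕ) < j := by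
  constructor
  · intro h
    obtain ⟨i, hi, hq⟩ := List.mem_iff_getElem.mp h
    rw [List.getElem_take, List.getElem_finRange] at hq
    have hval : (q : ℕ) = i := by rw [← hq]; rfl
    rw [List.length_take, List.length_finRange] at hi
    omega
  · intro h
    refine List.mem_iff_getElem.mpr ⟨(q : ℕ), ?_, ?_⟩
    · rw [List.length_take, List.length_finRange]; omega
    · rw [List.getElem_take, List.getElem_finRange]
      ext; rfl

lemma mem_drop_finRange {j : ℕ} (q : Fin n) :
    q ∈ (List.finRange n).drop j ↔ j ≤ (q : ℕ) := by
  constructor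
  · intro h
    obtain ⟨i, hi, hq⟩ := List.mem_iff_getElem.mp h
    rw [List.getElem_drop, List.getElem_finRange] at hq
    have hval : (q : ℕ) = j + i := by rw [← hq]; rfl
    omega
  · intro h
    refine List.mem_iff_getElem.mpr ⟨(q : ℕ) - j, ?_, ?_⟩
    · rw [List.length_drop, List.length_finRange]; omega
    · rw [List.getElem_drop, List.getElem_finRange]
      ext
      simp only [Fin.coe_cast]
      omega

lemma nodup_take_finRange (j : ℕ) : ((List.finRange n).take j).Nodup :=
  List.Nodup.sublist (List.take_sublist _ _) (List.nodup_finRange n)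

lemma sorted_take_finRange (j : ℕ) : ((List.finRange n).take j).Pairwise (· < ·) :=
  List.Pairwise.sublist (List.take_sublist _ _) (List.pairwise_lt_finRange n)

lemma nodup_drop_finRange (j : ℕ) : ((List.finRange n).drop j).Nodup :=
  List.Nodup.sublist (List.drop_sublist _ _) (List.nodup_finRange n)

lemma sorted_drop_finRange (j : ℕ) : ((List.finRange n).drop j).Pairwise (· < ·) :=
  List.Pairwise.sublist (List.drop_sublist _ _) (List.pairwise_lt_finRange n)

lemma toFinset_take_finRange (j : ℕ) :
    ((List.finRange n).take j).toFinset
      = Finset.univ.filter (fun q : Fin n => (q : ℕ) < j) := by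
  ext q
  simp [List.mem_toFinset, mem_take_finRange]

lemma take_map_shuffle {j : ℕ} {σ : Equiv.Perm (Fin n)} (hσ : IsShuffle j σ) :
    ((List.finRange n).take j).map σ = (shufSet j σ).sort (· ≤ ·) := by
  have hnd : (((List.finRange n).take j).map σ).Nodup :=
    (nodup_take_finRange j).map σ.injective
  have hsort : (((List.finRange n).take j).map σ).Pairwise (· ≤ ·) := by
    rw [List.pairwise_map]
    refine List.Pairwise.imp_of_mem ?_ (sorted_take_finRange j)
    intro s t hs ht hlt
    exact le_of_lt (hσ.1 s t hlt ((mem_take_finRange t).mp ht))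
  have htf : (((List.finRange n).take j).map σ).toFinset = shufSet j σ := by
    ext u
    simp only [List.mem_toFinset, List.mem_map, shufSet, Finset.mem_image, Finset.mem_filter,
      Finset.mem_univ, true_and, mem_take_finRange]
  rw [← htf]
  exact ((List.toFinset_sort (· ≤ ·) hnd).mpr hsort).symm

lemma image_ge_filter {j : ℕ} (σ : Equiv.Perm (Fin n)) :
    (Finset.univ.filter (fun q : Fin n => j ≤ (q : ℕ))).image σ
      = Finset.univ \ shufSet j σ := by
  ext u
  simp only [Finset.mem_image, Finset.mem_filter, Finset.mem_univ, true_and, Finset.mem_sdiff,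
    shufSet]
  constructor
  · rintro ⟨q, hq, rfl⟩ ⟨q', hq', he⟩
    have := σ.injective he
    omega
  · intro hu
    refine ⟨σ.symm u, ?_, σ.apply_symm_apply u⟩
    by_contra h
    push_neg at h
    exact hu ⟨σ.symm u, h, σ.apply_symm_apply u⟩

lemma drop_map_shuffle {j : ℕ} {σ : Equiv.Perm (Fin n)} (hσ : IsShuffle j σ) :
    ((List.finRange n).drop j).map σ = (Finset.univ \ shufSet j σ).sort (· ≤ ·) := by
  have hnd : (((List.finRange n).drop j).map σ).Nodup :=
    (nodup_drop_finRange j).map σ.injective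
  have hsort : (((List.finRange n).drop j).map σ).Pairwise (· ≤ ·) := by
    rw [List.pairwise_map]
    refine List.Pairwise.imp_of_mem ?_ (sorted_drop_finRange j)
    intro s t hs ht hlt
    exact le_of_lt (hσ.2 s t hlt ((mem_drop_finRange s).mp hs))
  have htf : (((List.finRange n).drop j).map σ).toFinset = Finset.univ \ shufSet j σ := by
    rw [← image_ge_filter σ]
    ext u
    simp only [List.mem_toFinset, List.mem_map, Finset.mem_image, Finset.mem_filter,
      Finset.mem_univ, true_and, mem_drop_finRange]
  rw [← htf]
  exact ((List.toFinset_sort (· ≤ ·) hnd).mpr hsort).symm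

lemma card_shufSet {j : ℕ} (σ : Equiv.Perm (Fin n)) (hj : j ≤ n) :
    (shufSet j σ).card = j := by
  rw [shufSet, Finset.card_image_of_injective _ σ.injective, ← toFinset_take_finRange,
    List.toFinset_card_of_nodup (nodup_take_finRange j), List.length_take,
    List.length_finRange]
  omega

/-- closed form of `koszulSign` for a shuffle -/
noncomputable def epsSign (p : Fin n → ZMod 2) (S : Finset (Fin n)) : ℤ :=
  ∏ q ∈ Finset.univ.filter (fun q : Fin n × Fin n => q.1 ∈ S ∧ q.2 ∉ S ∧ q.2 < q.1),
    ksign (p q.1) (p q.2)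

lemma koszulSign_shuffle {j : ℕ} {σ : Equiv.Perm (Fin n)} (hσ : IsShuffle j σ)
    (p : Fin n → ZMod 2) : koszulSign p σ = epsSign p (shufSet j σ) := by
  unfold koszulSign epsSign
  refine Finset.prod_nbij' (fun q => (σ q.1, σ q.2)) (fun q => (σ.symm q.1, σ.symm q.2))
    ?_ ?_ ?_ ?_ ?_
  · intro q hq
    rw [Finset.mem_filter] at hq ⊢
    obtain ⟨-, h12, hinv⟩ := hq
    have h1 : (q.1 : ℕ) < j := by
      by_contra h
      push_neg at h
      exact absurd (hσ.2 q.1 q.2 h12 h) (lt_asymm hinv)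
    have h2 : ¬ ((q.2 : ℕ) < j) := by
      intro h
      exact absurd (hσ.1 q.1 q.2 h12 h) (lt_asymm hinv)
    refine ⟨Finset.mem_univ _, ?_, ?_, hinv⟩
    · exact Finset.mem_image.mpr ⟨q.1, Finset.mem_filter.mpr ⟨Finset.mem_univ _, h1⟩, rfl⟩
    · rintro hmem
      obtain ⟨q', hq', he⟩ := Finset.mem_image.mp hmem
      rw [Finset.mem_filter] at hq'
      have := σ.injective he
      subst this
      exact h2 hq'.2
  · intro q hq
    rw [Finset.mem_filter] at hq ⊢
    obtain ⟨-, h1, h2, hlt⟩ := hq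
    obtain ⟨q1, hq1, he1⟩ := Finset.mem_image.mp h1
    rw [Finset.mem_filter] at hq1
    have hs1 : σ.symm q.1 = q1 := by rw [← he1, Equiv.symm_apply_apply]
    have hs2 : ¬ ((σ.symm q.2 : ℕ) < j) := by
      intro h
      exact h2 (Finset.mem_image.mpr ⟨σ.symm q.2,
        Finset.mem_filter.mpr ⟨Finset.mem_univ _, h⟩, σ.apply_symm_apply q.2⟩)
    refine ⟨Finset.mem_univ _, ?_, ?_⟩
    · dsimp only
      rw [Fin.lt_def, hs1]
      omega
    · rw [σ.apply_symm_apply, σ.apply_symm_apply]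
      exact hlt
  · intro q hq
    simp
  · intro q hq
    simp
  · intro q hq
    rfl

end shufflePart

section shufflePart2
variable {n : ℕ}

lemma exists_shuffle {j : ℕ} (S : Finset (Fin n)) (hcard : S.card = j) (hj : j ≤ n) :
    ∃ σ : Equiv.Perm (Fin n), IsShuffle j σ ∧ shufSet j σ = S := by
  classical
  set l : List (Fin n) := S.sort (· ≤ ·) ++ (Finset.univ \ S).sort (· ≤ ·) with hl
  have hlS : (S.sort (· ≤ ·)).length = j := by rw [Finset.length_sort, hcard]
  have hlen : l.length = n := by
    rw [hl, List.length_append, Finset.length_sort, Finset.length_sort,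
      Finset.card_sdiff_of_subset (Finset.subset_univ S), Finset.card_univ, Fintype.card_fin, hcard]
    omega
  have hnd : l.Nodup := by
    refine List.Nodup.append (Finset.sort_nodup _ _) (Finset.sort_nodup _ _) ?_
    intro x hx hx'
    rw [Finset.mem_sort] at hx hx'
    exact (Finset.mem_sdiff.mp hx').2 hx
  have hidx : ∀ q : Fin n, (q : ℕ) < l.length := fun q => by rw [hlen]; exact q.isLt
  set f : Fin n → Fin n := fun q => l[(q : ℕ)]'(hidx q) with hf
  have hfinj : Function.Injective f := by
    intro s t he
    have h2 : l.get ⟨(s : ℕ), hidx s⟩ = l.get ⟨(t : ℕ), hidx t⟩ := by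
      simpa [List.get_eq_getElem] using he
    have h3 := List.nodup_iff_injective_get.mp hnd h2
    have h4 : (s : ℕ) = (t : ℕ) := by simpa [Fin.mk.injEq] using h3
    ext
    exact h4
  have hbij := Finite.injective_iff_bijective.mp hfinj
  refine ⟨Equiv.ofBijective f hbij, ?_, ?_⟩
  · constructor
    · intro s t hst htj
      have hs : (s : ℕ) < j := lt_trans hst htj
      show f s < f t
      have es : f s = (S.sort (· ≤ ·))[(s : ℕ)]'(by rw [hlS]; exact hs) :=
        List.getElem_append_left (by rw [hlS]; exact hs)
      have et : f t = (S.sort (· ≤ ·))[(t : ℕ)]'(by rw [hlS]; exact htj) :=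
        List.getElem_append_left (by rw [hlS]; exact htj)
      rw [es, et]
      exact List.pairwise_iff_getElem.mp (Finset.sortedLT_sort S).pairwise _ _ _ _ hst
    · intro s t hst hsj
      have htj : j ≤ (t : ℕ) := le_trans hsj (le_of_lt hst)
      show f s < f t
      have es := List.getElem_append_right (as := S.sort (· ≤ ·))
        (bs := (Finset.univ \ S).sort (· ≤ ·)) (i := (s : ℕ))
        (h₁ := by rw [hlS]; exact hsj) (h₂ := hidx s)
      have et := List.getElem_append_right (as := S.sort (· ≤ ·))
        (bs := (Finset.univ \ S).sort (· ≤ ·)) (i := (t : ℕ))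
        (h₁ := by rw [hlS]; exact htj) (h₂ := hidx t)
      show l[(s : ℕ)]'(hidx s) < l[(t : ℕ)]'(hidx t)
      rw [es, et]
      refine List.pairwise_iff_getElem.mp (Finset.sortedLT_sort _).pairwise _ _ _ _ ?_
      rw [hlS]
      omega
  · ext u
    simp only [shufSet, Finset.mem_image, Finset.mem_filter, Finset.mem_univ, true_and]
    constructor
    · rintro ⟨q, hq, rfl⟩
      have e : (Equiv.ofBijective f hbij) q = (S.sort (· ≤ ·))[(q : ℕ)]'(by rw [hlS]; exact hq) :=
        List.getElem_append_left (by rw [hlS]; exact hq)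
      rw [e]
      exact (Finset.mem_sort _).mp (List.getElem_mem _)
    · intro hu
      have : u ∈ S.sort (· ≤ ·) := (Finset.mem_sort _).mpr hu
      obtain ⟨i, hi, he⟩ := List.mem_iff_getElem.mp this
      have hij : i < j := by rw [hlS] at hi; exact hi
      refine ⟨⟨i, lt_of_lt_of_le hij hj⟩, hij, ?_⟩
      have e : (Equiv.ofBijective f hbij) ⟨i, lt_of_lt_of_le hij hj⟩
          = (S.sort (· ≤ ·))[i]'hi :=
        List.getElem_append_left hi
      rw [e, he]

lemma shuffle_sum {M : Type} [AddCommMonoid M] (g : Finset (Fin n) → M) :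
    (∑ j ∈ Finset.range (n+1),
      ∑ σ ∈ Finset.univ.filter (fun σ : Equiv.Perm (Fin n) => IsShuffle j σ),
        g (shufSet j σ))
      = ∑ S : Finset (Fin n), g S := by
  have step : ∀ j ∈ Finset.range (n+1),
      (∑ σ ∈ Finset.univ.filter (fun σ : Equiv.Perm (Fin n) => IsShuffle j σ),
        g (shufSet j σ))
        = ∑ S ∈ Finset.univ.filter (fun S : Finset (Fin n) => S.card = j), g S := by
    intro j hj
    rw [Finset.mem_range] at hj
    have hj' : j ≤ n := by omega
    refine Finset.sum_bij (fun σ _ => shufSet j σ) ?_ ?_ ?_ ?_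
    · intro σ hσ
      exact Finset.mem_filter.mpr ⟨Finset.mem_univ _, card_shufSet σ hj'⟩
    · intro σ1 h1 σ2 h2 he
      rw [Finset.mem_filter] at h1 h2
      have he' : shufSet j σ1 = shufSet j σ2 := he
      have e1 : ((List.finRange n).take j).map σ1 = ((List.finRange n).take j).map σ2 := by
        rw [take_map_shuffle h1.2, take_map_shuffle h2.2, he']
      have e2 : ((List.finRange n).drop j).map σ1 = ((List.finRange n).drop j).map σ2 := by
        rw [drop_map_shuffle h1.2, drop_map_shuffle h2.2, he']
      apply Equiv.ext
      intro q
      by_cases hq : (q : ℕ) < j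
      · exact List.map_inj_left.mp e1 q ((mem_take_finRange q).mpr hq)
      · exact List.map_inj_left.mp e2 q ((mem_drop_finRange q).mpr (by omega))
    · intro S hS
      rw [Finset.mem_filter] at hS
      obtain ⟨σ, hσ, hset⟩ := exists_shuffle S hS.2 hj'
      exact ⟨σ, Finset.mem_filter.mpr ⟨Finset.mem_univ _, hσ⟩, hset⟩
    · intro σ hσ
      rfl
  rw [Finset.sum_congr rfl step]
  exact Finset.sum_fiberwise_of_maps_to
    (fun S _ => Finset.mem_range.mpr
      (lt_of_le_of_lt (by simpa using Finset.card_le_univ S) (Nat.lt_succ_self n))) g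

end shufflePart2

section signs
variable {n : ℕ}

lemma prod_ksign_eq_sgn_sum {ι : Type} (s : Finset ι) (f g : ι → ZMod 2) :
    (∏ i ∈ s, ksign (f i) (g i)) = sgn (∑ i ∈ s, f i * g i) := by
  induction s using Finset.cons_induction with
  | empty => simp [sgn_zero]
  | cons c s hc ih =>
    rw [Finset.prod_cons, Finset.sum_cons, ih, sgn_add, ksign_eq_sgn]

/-- total parity of a subset -/
def tau (p : Fin n → ZMod 2) (S : Finset (Fin n)) : ZMod 2 := ∑ i ∈ S, p i

/-- parity-weighted inversion count between `S` and its complement -/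
noncomputable def Xs (p : Fin n → ZMod 2) (S : Finset (Fin n)) : ZMod 2 :=
  ∑ q ∈ Finset.univ.filter (fun q : Fin n × Fin n => q.1 ∈ S ∧ q.2 ∉ S ∧ q.2 < q.1),
    p q.1 * p q.2

lemma epsSign_eq (p : Fin n → ZMod 2) (S : Finset (Fin n)) :
    epsSign p S = sgn (Xs p S) := by
  rw [epsSign, Xs]
  exact prod_ksign_eq_sgn_sum _ (fun q : Fin n × Fin n => p q.1) (fun q => p q.2)

lemma csign_univ_eq (p : Fin n → ZMod 2) (S : Finset (Fin n)) :
    csign p 1 Finset.univ S = sgn (tau p S + Xs p S) := by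
  rw [csign, prod_ksign_eq_sgn_sum]
  congr 1
  have expand1 : ∀ u : Fin n,
      (1 + ∑ v ∈ (Finset.univ \ S).filter (fun v => v < u), p v) * p u
        = p u + ∑ v ∈ (Finset.univ \ S).filter (fun v => v < u), p v * p u := by
    intro u
    rw [add_mul, one_mul, Finset.sum_mul]
  rw [Finset.sum_congr rfl (fun u _ => expand1 u), Finset.sum_add_distrib]
  congr 1
  -- now: ∑ u ∈ S, ∑ v ∈ (univ \ S).filter (· < u), p v * p u = Xs p S
  rw [Xs, Finset.sum_filter, Fintype.sum_prod_type]
  have hdiff : (Finset.univ \ S) = Finset.univ.filter (fun v => v ∉ S) := by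
    ext v; simp
  have key : ∀ u : Fin n,
      (if u ∈ S then ∑ v ∈ (Finset.univ \ S).filter (fun v => v < u), p v * p u else 0)
        = ∑ v : Fin n,
            if (u, v).1 ∈ S ∧ (u, v).2 ∉ S ∧ (u, v).2 < (u, v).1
              then p (u, v).1 * p (u, v).2 else 0 := by
    intro u
    by_cases hu : u ∈ S
    · rw [if_pos hu, hdiff, Finset.filter_filter, Finset.sum_filter]
      apply Finset.sum_congr rfl
      intro v _
      by_cases hv : v ∈ S <;> by_cases hvu : v < u <;>
        simp [hu, hv, hvu, mul_comm]
    · rw [if_neg hu]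
      symm
      apply Finset.sum_eq_zero
      intro v _
      rw [if_neg]
      tauto
  have step : (∑ u : Fin n,
      if u ∈ S then ∑ v ∈ (Finset.univ \ S).filter (fun v => v < u), p v * p u else 0)
        = ∑ u ∈ S, ∑ v ∈ (Finset.univ \ S).filter (fun v => v < u), p v * p u := by
    rw [Finset.sum_ite_mem, Finset.univ_inter]
  rw [← step]
  exact Finset.sum_congr rfl (fun u _ => key u)

lemma pairs_eq_product (S : Finset (Fin n)) :
    Finset.univ.filter (fun q : Fin n × Fin n => q.1 ∈ S ∧ q.2 ∉ S)
      = S ×ˢ (Finset.univ \ S) := by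
  ext q
  simp [Finset.mem_product, Finset.mem_sdiff]

lemma Xs_compl_rel (p : Fin n → ZMod 2) (S : Finset (Fin n)) :
    Xs p S + Xs p (Finset.univ \ S) = tau p S * tau p (Finset.univ \ S) := by
  classical
  have h1 : Xs p S
      = ∑ q ∈ (S ×ˢ (Finset.univ \ S)).filter (fun q => q.2 < q.1), p q.1 * p q.2 := by
    rw [Xs, ← pairs_eq_product, Finset.filter_filter]
    apply Finset.sum_congr
    · apply Finset.filter_congr
      intro q _
      tauto
    · intros; rfl
  have h2 : Xs p (Finset.univ \ S)
      = ∑ q ∈ (S ×ˢ (Finset.univ \ S)).filter (fun q => q.1 < q.2), p q.1 * p q.2 := by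
    rw [Xs]
    refine Finset.sum_nbij' (fun q => (q.2, q.1)) (fun q => (q.2, q.1)) ?_ ?_ ?_ ?_ ?_
    · intro q hq
      rw [Finset.mem_filter] at hq
      obtain ⟨-, h1', h2', h3'⟩ := hq
      rw [Finset.mem_filter, Finset.mem_product, Finset.mem_sdiff]
      refine ⟨⟨?_, ?_⟩, h3'⟩
      · by_contra hc
        exact h2' (Finset.mem_sdiff.mpr ⟨Finset.mem_univ _, hc⟩)
      · exact ⟨Finset.mem_univ _, (Finset.mem_sdiff.mp h1').2⟩
    · intro q hq
      rw [Finset.mem_filter, Finset.mem_product, Finset.mem_sdiff] at hq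
      obtain ⟨⟨hq1, -, hq2⟩, hlt⟩ := hq
      rw [Finset.mem_filter]
      refine ⟨Finset.mem_univ _, Finset.mem_sdiff.mpr ⟨Finset.mem_univ _, hq2⟩, ?_, hlt⟩
      intro hc
      exact (Finset.mem_sdiff.mp hc).2 hq1
    · intro q hq; rfl
    · intro q hq; rfl
    · intro q hq; exact mul_comm _ _
  rw [h1, h2]
  have h3 : ∑ q ∈ (S ×ˢ (Finset.univ \ S)).filter (fun q => q.1 < q.2), p q.1 * p q.2
      = ∑ q ∈ (S ×ˢ (Finset.univ \ S)).filter
          (fun q : Fin n × Fin n => ¬ q.2 < q.1), p q.1 * p q.2 := by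
    apply Finset.sum_congr _ (fun _ _ => rfl)
    apply Finset.filter_congr
    intro q hq
    rw [Finset.mem_product, Finset.mem_sdiff] at hq
    have hne : (q.1 : ℕ) ≠ (q.2 : ℕ) := by
      intro hc
      exact hq.2.2 ((Fin.ext hc : q.1 = q.2) ▸ hq.1)
    rw [Fin.lt_def, Fin.lt_def, not_lt]
    constructor
    · intro h; omega
    · intro h; omega
  rw [h3, Finset.sum_filter_add_sum_filter_not, tau, tau, Finset.sum_mul_sum,
    ← Finset.sum_product']

lemma sign_id1 : ∀ t1 t2 x1 x2 : ZMod 2, x1 + x2 = t1 * t2 →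
    sgn (t2 + x2) = -(sgn (t1 + x1) * ksign (1 + t1) (1 + t2)) := by decide

lemma sign_id2 : ∀ t1 t2 x1 x2 : ZMod 2, x1 + x2 = t1 * t2 →
    sgn x1 * ksign (1 + t1) t2 = sgn (t2 + x2) := by decide

lemma sum_map_sort {n : ℕ} {M : Type} [AddCommMonoid M] (f : Fin n → M) (S : Finset (Fin n)) :
    ((S.sort (· ≤ ·)).map f).sum = ∑ i ∈ S, f i := by
  rw [← Finset.sum_map_toList]
  exact ((Finset.sort_perm_toList (r := (· ≤ ·)) (s := S)).map f).sum_eq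

lemma br_split_left {k G : Type} [Field k] [AddCommGroup G] [Module k G]
    (L : LieSuper k G) (u v w : G) :
    L.br u w = L.br v w + L.br (u - v) w := by
  have h : v + (u - v) = u := by abel
  rw [← h, map_add, LinearMap.add_apply]
  rw [h]

lemma key {k G : Type} [Field k] [AddCommGroup G] [Module k G] [CharZero k]
    (L : LieSuper k G) (P : G →ₗ[k] G)
    (hP : ∀ x, P (P x) = P x)
    (hPgr : ∀ (i : ZMod 2) (x : G), x ∈ L.gr i → P x ∈ L.gr i)
    (hker : ∀ x y, P x = 0 → P y = 0 → P (L.br x y) = 0)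
    (habel : ∀ x y, L.br (P x) (P y) = 0)
    (D : G) (hD : D ∈ L.gr 1) {n : ℕ} (p : Fin n → ZMod 2) (a : Fin n → G)
    (ha : ∀ i, a i ∈ L.gr (p i) ∧ P (a i) = a i) :
    jacobiator L P D p a = dbr L P ((1 / 2 : k) • L.br D D) (List.ofFn a) := by
  classical
  have ha1 : ∀ i, a i ∈ L.gr (p i) := fun i => (ha i).1
  set BB : Finset (Fin n) → G := fun S => fb L D ((S.sort (· ≤ ·)).map a) with hBB
  have hBgr : ∀ S : Finset (Fin n), BB S ∈ L.gr (1 + tau p S) := by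
    intro S
    have := fb_gr L p a ha1 (S.sort (· ≤ ·)) D 1 hD
    rwa [sum_map_sort] at this
  have hPBgr : ∀ S, P (BB S) ∈ L.gr (1 + tau p S) := fun S => hPgr _ _ (hBgr S)
  have hNgr : ∀ S, BB S - P (BB S) ∈ L.gr (1 + tau p S) :=
    fun S => Submodule.sub_mem _ (hBgr S) (hPBgr S)
  have hPN : ∀ S : Finset (Fin n), P (BB S - P (BB S)) = 0 := by
    intro S; rw [map_sub, hP, sub_self]
  have hcc : ∀ S : Finset (Fin n), Finset.univ \ (Finset.univ \ S) = S := by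
    intro S
    rw [Finset.sdiff_sdiff_self_left, Finset.univ_inter]
  have reindex : ∀ (F : Finset (Fin n) → G),
      (∑ S : Finset (Fin n), F S) = ∑ S : Finset (Fin n), F (Finset.univ \ S) := by
    intro F
    refine Finset.sum_nbij' (fun S => Finset.univ \ S) (fun S => Finset.univ \ S)
      ?_ ?_ ?_ ?_ ?_ <;> intro S hS
    · exact Finset.mem_univ _
    · exact Finset.mem_univ _
    · exact hcc S
    · exact hcc S
    · rw [hcc S]
  have hid1 : ∀ S : Finset (Fin n),
      csign p 1 Finset.univ (Finset.univ \ S)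
        = -(csign p 1 Finset.univ S *
            ksign (1 + tau p S) (1 + tau p (Finset.univ \ S))) := by
    intro S
    rw [csign_univ_eq, csign_univ_eq]
    exact sign_id1 _ _ _ _ (Xs_compl_rel p S)
  have hid2 : ∀ S : Finset (Fin n),
      epsSign p S * ksign (1 + tau p S) (tau p (Finset.univ \ S))
        = csign p 1 Finset.univ (Finset.univ \ S) := by
    intro S
    rw [csign_univ_eq, epsSign_eq]
    exact sign_id2 _ _ _ _ (Xs_compl_rel p S)
  -- reduction of P [BB T, P (BB S)]
  have hred : ∀ S : Finset (Fin n),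
      P (L.br (BB (Finset.univ \ S)) (P (BB S)))
        = P (L.br (BB (Finset.univ \ S) - P (BB (Finset.univ \ S))) (P (BB S))) := by
    intro S
    rw [br_split_left L (BB (Finset.univ \ S)) (P (BB (Finset.univ \ S))) (P (BB S)),
      map_add, habel, map_zero, zero_add]
  -- splitting of P [BB S, BB T]
  have hsplit : ∀ S T : Finset (Fin n),
      P (L.br (BB S) (BB T))
        = P (L.br (P (BB S)) (BB T - P (BB T)))
          + P (L.br (BB S - P (BB S)) (P (BB T))) := by
    intro S T
    rw [br_split_left L (BB S) (P (BB S)) (BB T), map_add]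
    have e2 : ∀ u : G, L.br u (BB T) = L.br u (P (BB T)) + L.br u (BB T - P (BB T)) := by
      intro u
      have h : P (BB T) + (BB T - P (BB T)) = BB T := by abel
      rw [← h, map_add]
      rw [h]
    rw [e2 (P (BB S)), e2 (BB S - P (BB S)), map_add, map_add]
    rw [habel (BB S) (BB T), map_zero, hker _ _ (hPN S) (hPN T)]
    abel
  -- LHS: the jacobiator as a sum over subsets
  have jac_eq : jacobiator L P D p a
      = ∑ S : Finset (Fin n),
          epsSign p S •
            P (fb L (L.br D (P (BB S))) (((Finset.univ \ S).sort (· ≤ ·)).map a)) := by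
    rw [jacobiator, ← shuffle_sum (fun S => epsSign p S •
      P (fb L (L.br D (P (BB S))) (((Finset.univ \ S).sort (· ≤ ·)).map a)))]
    apply Finset.sum_congr rfl
    intro j hj
    apply Finset.sum_congr rfl
    intro σ hσ
    rw [Finset.mem_filter] at hσ
    have hs := hσ.2
    have e1 : ((List.finRange n).take j).map (fun i => a (σ i))
        = ((shufSet j σ).sort (· ≤ ·)).map a := by
      rw [← take_map_shuffle hs, List.map_map]
      rfl
    have e2 : ((List.finRange n).drop j).map (fun i => a (σ i))
        = ((Finset.univ \ shufSet j σ).sort (· ≤ ·)).map a := by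
      rw [← drop_map_shuffle hs, List.map_map]
      rfl
    rw [e1, e2, koszulSign_shuffle hs p]
    rfl
  have hbab : ∀ S : Finset (Fin n), ∀ c', L.br (P (BB S)) (a c') = 0 := by
    intro S c'
    rw [← (ha c').2]
    exact habel _ _
  have move : ∀ S : Finset (Fin n),
      fb L (L.br D (P (BB S))) (((Finset.univ \ S).sort (· ≤ ·)).map a)
        = ksign (1 + tau p S) (tau p (Finset.univ \ S)) •
            L.br (BB (Finset.univ \ S)) (P (BB S)) := by
    intro S
    have := movePast L p a ha1 (P (BB S)) (1 + tau p S) (hPBgr S) (hbab S)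
      ((Finset.univ \ S).sort (· ≤ ·)) D 1 hD
    rw [sum_map_sort] at this
    exact this
  have lhs_eq : jacobiator L P D p a
      = ∑ S : Finset (Fin n), csign p 1 Finset.univ (Finset.univ \ S) •
          P (L.br (BB (Finset.univ \ S) - P (BB (Finset.univ \ S))) (P (BB S))) := by
    rw [jac_eq]
    apply Finset.sum_congr rfl
    intro S _
    rw [move S, map_zsmul, hred S, smul_smul, hid2 S]
  -- RHS
  have rhs_eq : dbr L P ((1 / 2 : k) • L.br D D) (List.ofFn a)
      = ∑ S : Finset (Fin n), csign p 1 Finset.univ (Finset.univ \ S) •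
          P (L.br (BB (Finset.univ \ S) - P (BB (Finset.univ \ S))) (P (BB S))) := by
    show P (fb L ((1 / 2 : k) • L.br D D) (List.ofFn a)) = _
    rw [List.ofFn_eq_map, fb_smul, map_smul,
      fb_eq_expand L p a ha1 (List.finRange n) D D 1 1 hD hD,
      expand_closed L p a ha1 (List.finRange n) (List.pairwise_lt_finRange n) 1 D D,
      List.toFinset_finRange, Finset.powerset_univ, map_sum]
    have term_eq : ∀ S : Finset (Fin n),
        P (csign p 1 Finset.univ S •
            L.br (fb L D ((S.sort (· ≤ ·)).map a))
              (fb L D (((Finset.univ \ S).sort (· ≤ ·)).map a)))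
          = csign p 1 Finset.univ (Finset.univ \ S) •
              P (L.br (BB (Finset.univ \ S) - P (BB (Finset.univ \ S))) (P (BB S)))
            + csign p 1 Finset.univ S •
              P (L.br (BB S - P (BB S)) (P (BB (Finset.univ \ S)))) := by
      intro S
      rw [map_zsmul,
        show (fb L D ((S.sort (· ≤ ·)).map a)) = BB S from rfl,
        show (fb L D (((Finset.univ \ S).sort (· ≤ ·)).map a))
          = BB (Finset.univ \ S) from rfl,
        hsplit S (Finset.univ \ S), smul_add]
      congr 1
      rw [L.skew (1 + tau p S) (1 + tau p (Finset.univ \ S)) _ _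
        (hPBgr S) (hNgr (Finset.univ \ S)), map_neg, map_zsmul, smul_neg, smul_smul,
        ← neg_smul, ← hid1 S]
    rw [Finset.sum_congr rfl (fun S _ => term_eq S), Finset.sum_add_distrib]
    have swap : (∑ S : Finset (Fin n), csign p 1 Finset.univ S •
          P (L.br (BB S - P (BB S)) (P (BB (Finset.univ \ S)))))
        = ∑ S : Finset (Fin n), csign p 1 Finset.univ (Finset.univ \ S) •
            P (L.br (BB (Finset.univ \ S) - P (BB (Finset.univ \ S))) (P (BB S))) := by
      rw [reindex (fun S => csign p 1 Finset.univ S •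
        P (L.br (BB S - P (BB S)) (P (BB (Finset.univ \ S)))))]
      apply Finset.sum_congr rfl
      intro S _
      rw [hcc S]
    rw [swap,
      ← two_smul k (∑ S : Finset (Fin n), csign p 1 Finset.univ (Finset.univ \ S) •
        P (L.br (BB (Finset.univ \ S) - P (BB (Finset.univ \ S))) (P (BB S)))),
      smul_smul]
    norm_num
  rw [lhs_eq, rhs_eq]

end signs

end Stmt12Aux

/-- In the higher derived brackets setting, for odd `Δ` and `r ≥ 0`:
all derived brackets of `Δ² = ½[Δ,Δ]` with more than `r` arguments vanish iff all
Jacobi identities `Jⁿ_Δ = 0` hold for `n > r`. -/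
theorem stmt12 [CharZero k] (L : LieSuper k G) (P : G →ₗ[k] G)
    (hP : ∀ x, P (P x) = P x)
    (hPgr : ∀ (i : ZMod 2) (x : G), x ∈ L.gr i → P x ∈ L.gr i)
    (hker : ∀ x y, P x = 0 → P y = 0 → P (L.br x y) = 0)
    (habel : ∀ x y, L.br (P x) (P y) = 0)
    (D : G) (hD : D ∈ L.gr 1) (r : ℕ) :
    (∀ (n : ℕ), r < n → ∀ (p : Fin n → ZMod 2) (a : Fin n → G),
        (∀ i, a i ∈ L.gr (p i) ∧ P (a i) = a i) →
        dbr L P ((1 / 2 : k) • L.br D D) (List.ofFn a) = 0) ↔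
      (∀ (n : ℕ), r < n → ∀ (p : Fin n → ZMod 2) (a : Fin n → G),
        (∀ i, a i ∈ L.gr (p i) ∧ P (a i) = a i) →
        jacobiator L P D p a = 0) := by
  
  constructor
  · intro h n hn p a ha
    rw [Stmt12Aux.key L P hP hPgr hker habel D hD p a ha]
    exact h n hn p a ha
  · intro h n hn p a ha
    rw [← Stmt12Aux.key L P hP hPgr hker habel D hD p a ha]
    exact h n hn p a ha
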